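/- Every finitely generated free quandle is Hopfian. -/

import Mathlib

open Quandles

/-- The free rack on a set `S`: pairs `(a, w)` (thought of as the conjugate
`w a w⁻¹` of the generator `a`), following Fenn–Rourke. -/
def FreeRack (S : Type u) : Type u := S × FreeGroup S

namespace FreeRack

variable {S : Type u}

/-- The element of the free group represented by the pair `(a, w)`,
namely the conjugate `w a w⁻¹` of the generator `a`. -/
def toGroup (x : FreeRack S) : FreeGroup S := x.2 * FreeGroup.of x.1 * x.2⁻¹

instance : Rack (FreeRack S) where
  act x y := (y.1, toGroup x * y.2)
  self_distrib := by
    rintro ⟨a, w⟩ ⟨b, u⟩ ⟨c, v⟩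
    refine Prod.ext rfl ?_
    show toGroup (a, w) * (toGroup (b, u) * v)
        = toGroup (b, toGroup (a, w) * u) * (toGroup (a, w) * v)
    simp only [toGroup]
    group
  invAct x y := (y.1, (toGroup x)⁻¹ * y.2)
  left_inv x y := by
    refine Prod.ext rfl ?_
    show (toGroup x)⁻¹ * (toGroup x * y.2) = y.2
    group
  right_inv x y := by
    refine Prod.ext rfl ?_
    show toGroup x * ((toGroup x)⁻¹ * y.2) = y.2
    group

/-- The defining relation of the free quandle as a quotient of the free rack:
`(a, w) ~ (a, w · a)`. -/
def rel (p q : FreeRack S) : Prop := q = (p.1, p.2 * FreeGroup.of p.1)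

theorem toGroup_of_rel {p q : FreeRack S} (h : rel p q) : toGroup p = toGroup q := by
  subst h
  rcases p with ⟨a, w⟩
  simp only [toGroup]
  group

theorem toGroup_of_eqvGen {p q : FreeRack S} (h : Relation.EqvGen rel p q) :
    toGroup p = toGroup q := by
  induction h with
  | rel a b hab => exact toGroup_of_rel hab
  | refl a => rfl
  | symm a b _ ih => exact ih.symm
  | trans a b c _ _ ih1 ih2 => exact ih1.trans ih2

theorem fst_of_eqvGen {p q : FreeRack S} (h : Relation.EqvGen rel p q) : p.1 = q.1 := by
  induction h with
  | rel a b hab => rw [hab]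
  | refl a => rfl
  | symm a b _ ih => exact ih.symm
  | trans a b c _ _ ih1 ih2 => exact ih1.trans ih2

/-- The setoid generated by the relation `(a, w) ~ (a, w · a)`. -/
instance setoid (S : Type u) : Setoid (FreeRack S) :=
  ⟨Relation.EqvGen rel, Relation.EqvGen.is_equivalence rel⟩

theorem act_eqvGen_right (p : FreeRack S) {q q' : FreeRack S}
    (h : Relation.EqvGen rel q q') : Relation.EqvGen rel (p ◃ q) (p ◃ q') := by
  induction h with
  | rel a b hab =>
      refine Relation.EqvGen.rel _ _ ?_
      rw [hab]
      refine Prod.ext rfl ?_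
      show toGroup p * (a.2 * FreeGroup.of a.1) = toGroup p * a.2 * FreeGroup.of a.1
      group
  | refl a => exact Relation.EqvGen.refl _
  | symm a b _ ih => exact Relation.EqvGen.symm _ _ ih
  | trans a b c _ _ ih1 ih2 => exact Relation.EqvGen.trans _ _ _ ih1 ih2

theorem act_eq_of_eqvGen_left {p p' : FreeRack S} (q : FreeRack S)
    (h : Relation.EqvGen rel p p') : p ◃ q = p' ◃ q := by
  show (q.1, toGroup p * q.2) = (q.1, toGroup p' * q.2)
  rw [toGroup_of_eqvGen h]

theorem invAct_eqvGen_right (p : FreeRack S) {q q' : FreeRack S}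
    (h : Relation.EqvGen rel q q') : Relation.EqvGen rel (p ◃⁻¹ q) (p ◃⁻¹ q') := by
  induction h with
  | rel a b hab =>
      refine Relation.EqvGen.rel _ _ ?_
      rw [hab]
      refine Prod.ext rfl ?_
      show (toGroup p)⁻¹ * (a.2 * FreeGroup.of a.1) = (toGroup p)⁻¹ * a.2 * FreeGroup.of a.1
      group
  | refl a => exact Relation.EqvGen.refl _
  | symm a b _ ih => exact Relation.EqvGen.symm _ _ ih
  | trans a b c _ _ ih1 ih2 => exact Relation.EqvGen.trans _ _ _ ih1 ih2

theorem invAct_eq_of_eqvGen_left {p p' : FreeRack S} (q : FreeRack S)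
    (h : Relation.EqvGen rel p p') : p ◃⁻¹ q = p' ◃⁻¹ q := by
  show (q.1, (toGroup p)⁻¹ * q.2) = (q.1, (toGroup p')⁻¹ * q.2)
  rw [toGroup_of_eqvGen h]

end FreeRack

/-- The free quandle on a set `S`: the quotient of the free rack on `S` by the
equivalence relation generated by `(a, w) ~ (a, w · a)`. -/
def FreeQuandle (S : Type u) : Type u := Quotient (FreeRack.setoid S)

namespace FreeQuandle

variable {S : Type u}

instance : Quandle (FreeQuandle S) where
  act := Quotient.map₂ Shelf.act (by
    intro p p' hp q q' hq
    calc Shelf.act p q = Shelf.act p' q := FreeRack.act_eq_of_eqvGen_left q hp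
    _ ≈ Shelf.act p' q' := FreeRack.act_eqvGen_right p' hq)
  self_distrib := by
    intro x y z
    refine Quotient.inductionOn₃ x y z (fun p q r => ?_)
    exact congrArg (Quotient.mk _) Shelf.self_distrib
  invAct := Quotient.map₂ Rack.invAct (by
    intro p p' hp q q' hq
    calc Rack.invAct p q = Rack.invAct p' q := FreeRack.invAct_eq_of_eqvGen_left q hp
    _ ≈ Rack.invAct p' q' := FreeRack.invAct_eqvGen_right p' hq)
  left_inv := by
    intro x y
    refine Quotient.inductionOn₂ x y (fun p q => ?_)
    exact congrArg (Quotient.mk _) (Rack.left_inv p q)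
  right_inv := by
    intro x y
    refine Quotient.inductionOn₂ x y (fun p q => ?_)
    exact congrArg (Quotient.mk _) (Rack.right_inv p q)
  fix := by
    intro x
    refine Quotient.inductionOn x (fun p => ?_)
    refine Quotient.sound ?_
    refine Relation.EqvGen.trans _ _ _ (Relation.EqvGen.refl _) ?_
    have h : p ◃ p = (p.1, p.2 * FreeGroup.of p.1) := by
      refine Prod.ext rfl ?_
      show FreeRack.toGroup p * p.2 = p.2 * FreeGroup.of p.1
      simp only [FreeRack.toGroup]
      group
    rw [h]
    exact Relation.EqvGen.symm _ _ (Relation.EqvGen.rel _ _ rfl)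

/-- The canonical inclusion of the generating set into the free quandle. -/
def of (a : S) : FreeQuandle S := Quotient.mk _ (a, 1)

/-- The natural map from the free quandle on `S` into the conjugation quandle
of the free group on `S`, sending the class of `(a, w)` to the conjugate
`w a w⁻¹` of the generator `a`. -/
def toConj : FreeQuandle S → Quandle.Conj (FreeGroup S) :=
  Quotient.lift FreeRack.toGroup (fun _ _ h => FreeRack.toGroup_of_eqvGen h)

end FreeQuandle


set_option linter.unusedSectionVars false
set_option maxHeartbeats 1000000

namespace FQAux

variable {S : Type} [DecidableEq S]

/-- helper: index bound from getElem? -/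
theorem lt_of_getElem? {M : List (S × Bool)} {i : ℕ} {a : S × Bool}
    (h : M[i]? = some a) : i < M.length := by
  rcases List.getElem?_eq_some_iff.mp h with ⟨h', _⟩
  exact h'

section Perm

variable (M : List (S × Bool))
  (noC : ∀ (i : ℕ) (s : S) (b : Bool), M[i]? = some (s, b) → M[i+1]? ≠ some (s, !b))

def pP (s : S) (k : Fin (M.length + 1)) : Prop :=
  M[(k : ℕ)]? = some (s, true) ∨ ((k : ℕ) ≠ 0 ∧ M[(k : ℕ) - 1]? = some (s, false))

def qP (s : S) (k : Fin (M.length + 1)) : Prop :=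
  ((k : ℕ) ≠ 0 ∧ M[(k : ℕ) - 1]? = some (s, true)) ∨ M[(k : ℕ)]? = some (s, false)

instance (s : S) : DecidablePred (pP M s) := fun k => by unfold pP; infer_instance
instance (s : S) : DecidablePred (qP M s) := fun k => by unfold qP; infer_instance

def eS (s : S) : { k // pP M s k } ≃ { k // qP M s k } where
  toFun := fun ⟨k, h⟩ =>
    if hA : M[(k : ℕ)]? = some (s, true) then
      ⟨⟨(k : ℕ) + 1, by have := lt_of_getElem? hA; omega⟩,
        Or.inl ⟨Nat.succ_ne_zero _, by simpa using hA⟩⟩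
    else
      ⟨⟨(k : ℕ) - 1, by omega⟩, Or.inr (by
        rcases h with h | h
        · exact absurd h hA
        · exact h.2)⟩
  invFun := fun ⟨k, h⟩ =>
    if hA : (k : ℕ) ≠ 0 ∧ M[(k : ℕ) - 1]? = some (s, true) then
      ⟨⟨(k : ℕ) - 1, by omega⟩, Or.inl (by simpa using hA.2)⟩
    else
      ⟨⟨(k : ℕ) + 1, by
        have : M[(k : ℕ)]? = some (s, false) := by
          rcases h with h | h
          · exact absurd h hA
          · exact h
        have := lt_of_getElem? this; omega⟩, Or.inr ⟨Nat.succ_ne_zero _, by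
        rcases h with h | h
        · exact absurd h hA
        · simpa using h⟩⟩
  left_inv := by
    rintro ⟨k, h⟩
    by_cases hA : M[(k : ℕ)]? = some (s, true)
    · simp only [hA, dif_pos]
      have hq : ((⟨(k : ℕ) + 1, by have := lt_of_getElem? hA; omega⟩ : Fin (M.length + 1)) : ℕ) ≠ 0
          ∧ M[((k : ℕ) + 1) - 1]? = some (s, true) := ⟨Nat.succ_ne_zero _, by simpa using hA⟩
      simp only [dif_pos hq]
      apply Subtype.ext; apply Fin.ext; simp
    · simp only [hA, dif_neg, not_false_iff]
      have hB : (k : ℕ) ≠ 0 ∧ M[(k : ℕ) - 1]? = some (s, false) := by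
        rcases h with h | h
        · exact absurd h hA
        · exact h
      -- show the qA branch is not taken at k - 1
      have hnq : ¬ (((k : ℕ) - 1) ≠ 0 ∧ M[((k : ℕ) - 1) - 1]? = some (s, true)) := by
        rintro ⟨h1, h2⟩
        have h3 : M[((k : ℕ) - 2) + 1]? = some (s, !true) := by
          have : ((k : ℕ) - 2) + 1 = (k : ℕ) - 1 := by omega
          rw [this]; simpa using hB.2
        exact noC _ _ _ (by rw [show (k : ℕ) - 2 = (k : ℕ) - 1 - 1 by omega]; exact h2 : M[(k : ℕ) - 2]? = some (s, true)) h3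
      simp only [dif_neg hnq]
      apply Subtype.ext; apply Fin.ext
      simp only []
      show ((k : ℕ) - 1) + 1 = (k : ℕ)
      omega
  right_inv := by
    rintro ⟨k, h⟩
    by_cases hA : (k : ℕ) ≠ 0 ∧ M[(k : ℕ) - 1]? = some (s, true)
    · simp only [dif_pos hA]
      have hp : M[((k : ℕ) - 1)]? = some (s, true) := hA.2
      simp only [dif_pos (by simpa using hp : M[(((⟨(k : ℕ) - 1, by omega⟩ : Fin (M.length+1))) : ℕ)]? = some (s, true))]
      apply Subtype.ext; apply Fin.ext
      show ((k : ℕ) - 1) + 1 = (k : ℕ)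
      omega
    · simp only [dif_neg hA]
      have hB : M[(k : ℕ)]? = some (s, false) := by
        rcases h with h | h
        · exact absurd h hA
        · exact h
      have hnp : ¬ (M[((k : ℕ) + 1)]? = some (s, true)) := by
        intro h2
        exact noC _ _ _ hB (by simpa using h2)
      simp only [dif_neg (by simpa using hnp)]
      apply Subtype.ext; apply Fin.ext
      show ((k : ℕ) + 1) - 1 = (k : ℕ)
      omega

noncomputable def piS (s : S) : Equiv.Perm (Fin (M.length + 1)) :=
  (eS M noC s).extendSubtype

theorem piS_up (s : S) (j : ℕ) (hj : M[j]? = some (s, true))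
    (h1 : j < M.length + 1) (h2 : j + 1 < M.length + 1) :
    piS M noC s ⟨j, h1⟩ = ⟨j + 1, h2⟩ := by
  have hp : pP M s ⟨j, h1⟩ := Or.inl hj
  rw [piS, Equiv.extendSubtype_apply_of_mem _ _ hp]
  show ((eS M noC s) ⟨⟨j, h1⟩, hp⟩ : Fin (M.length+1)) = _
  simp only [eS, Equiv.coe_fn_mk, Fin.val_mk]
  rw [dif_pos hj]

theorem piS_down (s : S) (j : ℕ) (hj : M[j]? = some (s, false))
    (h1 : j + 1 < M.length + 1) (h2 : j < M.length + 1) :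
    piS M noC s ⟨j + 1, h1⟩ = ⟨j, h2⟩ := by
  have hp : pP M s ⟨j + 1, h1⟩ := Or.inr ⟨Nat.succ_ne_zero _, by simpa using hj⟩
  rw [piS, Equiv.extendSubtype_apply_of_mem _ _ hp]
  show ((eS M noC s) ⟨⟨j + 1, h1⟩, hp⟩ : Fin (M.length+1)) = _
  simp only [eS, Equiv.coe_fn_mk, Fin.val_mk]
  have hA : ¬ (M[j + 1]? = some (s, true)) := by
    intro h2'
    exact noC _ _ _ hj (by simpa using h2')
  rw [dif_neg (by simpa using hA)]
  apply Fin.ext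
  show (j + 1) - 1 = j
  omega

theorem piS_down_inv (s : S) (j : ℕ) (hj : M[j]? = some (s, false))
    (h1 : j + 1 < M.length + 1) (h2 : j < M.length + 1) :
    (piS M noC s)⁻¹ ⟨j, h2⟩ = ⟨j + 1, h1⟩ := by
  rw [Equiv.Perm.inv_eq_iff_eq]
  exact (piS_down M noC s j hj h1 h2).symm

end Perm

section Walk

variable (L : List (S × Bool))
  (noC : ∀ (i : ℕ) (s : S) (b : Bool),
    L.reverse[i]? = some (s, b) → L.reverse[i+1]? ≠ some (s, !b))

theorem walk : ∀ (L2 L1 : List (S × Bool)), L = L1 ++ L2 →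
    (((L2.map (fun x => cond x.2 (piS L.reverse noC x.1) (piS L.reverse noC x.1)⁻¹)).prod
      ⟨0, Nat.succ_pos _⟩ : Fin (L.reverse.length + 1)) : ℕ) = L2.length := by
  intro L2
  induction L2 with
  | nil => intro L1 h; simp
  | cons x L2 ih =>
      intro L1 h
      have h' : L = (L1 ++ [x]) ++ L2 := by simp [h]
      have hin := ih (L1 ++ [x]) h'
      have bnd : L2.length < L.reverse.length + 1 := by
        have := congrArg List.length h
        simp at this
        simp [List.length_reverse]
        omega
      have heq : ((L2.map (fun x => cond x.2 (piS L.reverse noC x.1) (piS L.reverse noC x.1)⁻¹)).prod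
          ⟨0, Nat.succ_pos _⟩ : Fin (L.reverse.length + 1)) = ⟨L2.length, bnd⟩ :=
        Fin.ext hin
      have hM : L.reverse[L2.length]? = some x := by
        have : L.reverse = L2.reverse ++ x :: L1.reverse := by
          rw [h']; simp
        rw [this, List.getElem?_append_right (by simp)]
        simp
      have bnd2 : L2.length + 1 < L.reverse.length + 1 := by
        have := lt_of_getElem? hM; omega
      rcases x with ⟨s, bb⟩
      simp only [List.map_cons, List.prod_cons, Equiv.Perm.mul_apply, heq]
      cases bb with
      | true =>
          simp only [cond_true]
          rw [piS_up L.reverse noC s L2.length hM bnd bnd2]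
          simp
      | false =>
          simp only [cond_false]
          rw [piS_down_inv L.reverse noC s L2.length hM bnd2 bnd]
          simp

end Walk

theorem toWord_noC (w : FreeGroup S) :
    ∀ (i : ℕ) (s : S) (b : Bool),
      w.toWord[i]? = some (s, b) → w.toWord[i+1]? ≠ some (s, !b) := by
  intro i s b h1 h2
  set L := w.toWord with hL
  have e2 : i + 1 < L.length := lt_of_getElem? h2
  have e1 : i < L.length := by omega
  have g1 : L[i] = (s, b) := by
    rcases List.getElem?_eq_some_iff.mp h1 with ⟨_, hh⟩; exact hh
  have g2 : L[i+1] = (s, !b) := by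
    rcases List.getElem?_eq_some_iff.mp h2 with ⟨_, hh⟩; exact hh
  have hsplit : L = L.take i ++ (s, b) :: (s, !b) :: L.drop (i + 2) := by
    conv_lhs => rw [← List.take_append_drop i L]
    rw [List.drop_eq_getElem_cons e1, g1, List.drop_eq_getElem_cons e2, g2]
  have hred : FreeGroup.reduce L = L.take i ++ (s, b) :: (s, !b) :: L.drop (i + 2) := by
    rw [hL, FreeGroup.reduce_toWord]; rw [← hL]; exact hsplit
  exact FreeGroup.reduce.not hred

theorem rev_noC (w : FreeGroup S) :
    ∀ (i : ℕ) (s : S) (b : Bool),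
      w.toWord.reverse[i]? = some (s, b) → w.toWord.reverse[i+1]? ≠ some (s, !b) := by
  intro i s b h1 h2
  set L := w.toWord with hL
  have e2 : i + 1 < L.length := by
    have := lt_of_getElem? h2; simpa using this
  have e1 : i < L.length := by omega
  rw [List.getElem?_reverse e1] at h1
  rw [List.getElem?_reverse e2] at h2
  have hidx : L.length - 1 - (i+1) + 1 = L.length - 1 - i := by omega
  have hthis := toWord_noC w (L.length - 1 - (i+1)) s (!b) h2
  rw [hidx, Bool.not_not] at hthis
  exact hthis h1

theorem exists_finhom (w : FreeGroup S) (hw : w ≠ 1) :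
    ∃ (n : ℕ) (h : FreeGroup S →* Equiv.Perm (Fin (n + 1))), h w ≠ 1 := by
  set L := w.toWord with hL
  have noC := rev_noC w
  refine ⟨L.reverse.length, FreeGroup.lift (fun s => piS L.reverse noC s), ?_⟩
  intro hone
  have hw' : (FreeGroup.lift (fun s => piS L.reverse noC s)) w
      = (L.map (fun x => cond x.2 (piS L.reverse noC x.1) (piS L.reverse noC x.1)⁻¹)).prod := by
    conv_lhs => rw [← FreeGroup.mk_toWord (x := w)]
    rw [FreeGroup.lift_mk]
  have hwalk := walk L noC L [] rfl
  have hne : L.length ≠ 0 := by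
    intro h0
    exact hw (FreeGroup.toWord_eq_nil_iff.mp (List.length_eq_zero_iff.mp h0))
  have : (((FreeGroup.lift (fun s => piS L.reverse noC s)) w ⟨0, Nat.succ_pos _⟩
      : Fin (L.reverse.length + 1)) : ℕ) = L.length := by rw [hw']; exact hwalk
  rw [hone] at this
  simp at this
  exact hne this.symm

end FQAux

theorem FQAux.freeGroup_hopfian {S : Type} [Finite S] (ψ : FreeGroup S →* FreeGroup S)
    (hs : Function.Surjective ψ) : Function.Injective ψ := by
  haveI := Classical.decEq S
  rw [← MonoidHom.ker_eq_bot_iff]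
  rw [Subgroup.eq_bot_iff_forall]
  intro x hx
  by_contra hx1
  obtain ⟨n, h, hh⟩ := FQAux.exists_finhom x hx1
  set G := Equiv.Perm (Fin (n + 1)) with hG
  have hinj : Function.Injective (fun f : FreeGroup S →* G => f.comp ψ) := by
    intro f f' he
    refine MonoidHom.ext fun y => ?_
    obtain ⟨z, rfl⟩ := hs y
    exact DFunLike.congr_fun he z
  haveI : Finite (FreeGroup S →* G) := Finite.of_equiv _ FreeGroup.lift
  obtain ⟨f, hf⟩ := Finite.injective_iff_surjective.mp hinj h
  have hfx := DFunLike.congr_fun hf x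
  simp only [MonoidHom.comp_apply] at hfx
  rw [MonoidHom.mem_ker.mp hx] at hfx
  simp at hfx
  exact hh hfx.symm

namespace FQAux

open FreeQuandle

variable {S : Type}

/-- Abbreviation for the quotient map into the free quandle. -/
def fqmk (p : FreeRack S) : FreeQuandle S := Quotient.mk (FreeRack.setoid S) p

theorem act_mk (p q : FreeRack S) :
    fqmk p ◃ fqmk q = fqmk (q.1, FreeRack.toGroup p * q.2) := rfl

theorem invAct_mk (p q : FreeRack S) :
    fqmk p ◃⁻¹ fqmk q = fqmk (q.1, (FreeRack.toGroup p)⁻¹ * q.2) := rfl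

theorem map_invAct {Q1 Q2 : Type} [Rack Q1] [Rack Q2] (f : ShelfHom Q1 Q2) (x y : Q1) :
    f (x ◃⁻¹ y) = f x ◃⁻¹ f y := by
  have h1 : x ◃ (x ◃⁻¹ y) = y := Rack.right_inv x y
  calc f (x ◃⁻¹ y) = f x ◃⁻¹ (f x ◃ f (x ◃⁻¹ y)) := (Rack.left_inv (f x) _).symm
    _ = f x ◃⁻¹ f (x ◃ (x ◃⁻¹ y)) := by rw [ShelfHom.map_act]
    _ = f x ◃⁻¹ f y := by rw [h1]

theorem eqv_pow (a : S) (w : FreeGroup S) (k : ℤ) :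
    fqmk (a, w) = fqmk ((a, w * (FreeGroup.of a) ^ k) : FreeRack S) := by
  apply Quotient.sound
  have step : ∀ u : FreeGroup S,
      Relation.EqvGen FreeRack.rel (a, u) (a, u * FreeGroup.of a) :=
    fun u => Relation.EqvGen.rel _ _ rfl
  induction k using Int.induction_on with
  | zero => exact (by simpa using Relation.EqvGen.refl (r := FreeRack.rel) (a, w) : Relation.EqvGen FreeRack.rel (a, w) (a, w * FreeGroup.of a ^ (0 : ℤ)))
  | succ n ih =>
      have h2 := Relation.EqvGen.trans _ _ _ ih (step (w * FreeGroup.of a ^ (n : ℤ)))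
      have he : w * FreeGroup.of a ^ (n : ℤ) * FreeGroup.of a
          = w * FreeGroup.of a ^ ((n : ℤ) + 1) := by
        rw [zpow_add_one, mul_assoc]
      rwa [he] at h2
  | pred n ih =>
      have h2 := (step (w * FreeGroup.of a ^ (-(n : ℤ) - 1))).symm _ _
      have he : w * FreeGroup.of a ^ (-(n : ℤ) - 1) * FreeGroup.of a
          = w * FreeGroup.of a ^ (-(n : ℤ)) := by
        rw [mul_assoc, ← zpow_add_one]
        ring_nf
      rw [he] at h2
      exact Relation.EqvGen.trans _ _ _ ih h2

theorem eqv_spec {p q : FreeRack S} (h : Relation.EqvGen FreeRack.rel p q) :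
    p.1 = q.1 ∧ ∃ k : ℤ, q.2 = p.2 * (FreeGroup.of p.1) ^ k := by
  induction h with
  | rel a b hab =>
      refine ⟨by rw [hab], 1, ?_⟩
      rw [hab]; simp
  | refl a => exact ⟨rfl, 0, by simp⟩
  | symm a b h ih =>
      obtain ⟨h1, k, hk⟩ := ih
      exact ⟨h1.symm, -k, by rw [hk, ← h1]; group⟩
  | trans a b c h1 h2 ih1 ih2 =>
      obtain ⟨e1, k1, hk1⟩ := ih1
      obtain ⟨e2, k2, hk2⟩ := ih2
      exact ⟨e1.trans e2, k1 + k2, by rw [hk2, hk1, ← e1]; group⟩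

section Phi

variable [DecidableEq S] (φ : FreeQuandle S →◃ FreeQuandle S)

noncomputable def rr (s : S) : FreeRack S := (φ (FreeQuandle.of s)).out

noncomputable def psi : FreeGroup S →* FreeGroup S :=
  FreeGroup.lift (fun s => FreeRack.toGroup (rr φ s))

theorem psi_of (s : S) : psi φ (FreeGroup.of s) = FreeRack.toGroup (rr φ s) :=
  FreeGroup.lift_apply_of

theorem phi_mk_one (b : S) : φ (fqmk ((b, 1) : FreeRack S)) = fqmk (rr φ b) := by
  have : fqmk ((b, 1) : FreeRack S) = FreeQuandle.of b := rfl
  rw [this, rr]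
  exact (Quotient.out_eq _).symm

theorem phi_formula (b : S) (u : FreeGroup S) :
    φ (fqmk ((b, u) : FreeRack S)) = fqmk ((rr φ b).1, psi φ u * (rr φ b).2) := by
  suffices h : ∀ L : List (S × Bool),
      φ (fqmk ((b, FreeGroup.mk L) : FreeRack S))
        = fqmk ((rr φ b).1, psi φ (FreeGroup.mk L) * (rr φ b).2) by
    conv_lhs => rw [← FreeGroup.mk_toWord (x := u)]
    conv_rhs => rw [← FreeGroup.mk_toWord (x := u)]
    exact h _
  intro L
  induction L with
  | nil =>
      rw [← FreeGroup.one_eq_mk]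
      rw [phi_mk_one, map_one, one_mul]; rfl
  | cons x L ih =>
      rcases x with ⟨s, bb⟩
      cases bb with
      | true =>
          have hcons : FreeGroup.mk ((s, true) :: L) = FreeGroup.of s * FreeGroup.mk L := by
            rw [FreeGroup.of, FreeGroup.mul_mk]; rfl
          rw [hcons]
          have hact : fqmk ((b, FreeGroup.of s * FreeGroup.mk L) : FreeRack S)
              = FreeQuandle.of s ◃ fqmk ((b, FreeGroup.mk L) : FreeRack S) := by
            show _ = fqmk ((s, 1) : FreeRack S) ◃ _
            erw [act_mk]
            simp [FreeRack.toGroup]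
          rw [hact, ShelfHom.map_act, ih]
          have hphi : φ (FreeQuandle.of s) = fqmk (rr φ s) :=
            (Quotient.out_eq _).symm
          rw [hphi]; erw [act_mk]
          refine congrArg _ (Prod.ext rfl ?_)
          rw [map_mul, psi_of, mul_assoc]
      | false =>
          have hcons : FreeGroup.mk ((s, false) :: L) = (FreeGroup.of s)⁻¹ * FreeGroup.mk L := by
            rw [FreeGroup.of, FreeGroup.inv_mk]
            rw [FreeGroup.mul_mk]; rfl
          rw [hcons]
          have hact : fqmk ((b, (FreeGroup.of s)⁻¹ * FreeGroup.mk L) : FreeRack S)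
              = FreeQuandle.of s ◃⁻¹ fqmk ((b, FreeGroup.mk L) : FreeRack S) := by
            show _ = fqmk ((s, 1) : FreeRack S) ◃⁻¹ _
            erw [invAct_mk]
            simp [FreeRack.toGroup]
          rw [hact, map_invAct, ih]
          have hphi : φ (FreeQuandle.of s) = fqmk (rr φ s) :=
            (Quotient.out_eq _).symm
          rw [hphi]; erw [invAct_mk]
          refine congrArg _ (Prod.ext rfl ?_)
          rw [map_mul, map_inv, psi_of, mul_assoc]

end Phi

end FQAux

/-- Every finitely generated free quandle is Hopfian: each surjective
endomorphism of the free quandle on a finite set is injective. -/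
theorem fg_free_quandle_hopfian (S : Type) [Fintype S]
    (φ : FreeQuandle S →◃ FreeQuandle S) (hφ : Function.Surjective φ) :
    Function.Injective φ := by
  classical
  have hdata : ∀ t : S, ∃ (b : S) (u : FreeGroup S) (k : ℤ),
      (FQAux.rr φ b).1 = t ∧
      (1 : FreeGroup S) = FQAux.psi φ u * (FQAux.rr φ b).2 * (FreeGroup.of t) ^ k := by
    intro t
    obtain ⟨x, hx⟩ := hφ (FreeQuandle.of t)
    have hxx : FQAux.fqmk ((x.out.1, x.out.2) : FreeRack S) = x := by
      exact Quotient.out_eq x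
    rw [← hxx, FQAux.phi_formula] at hx
    have hof : FreeQuandle.of t = FQAux.fqmk ((t, 1) : FreeRack S) := rfl
    rw [hof] at hx
    obtain ⟨h1, k, hk⟩ := FQAux.eqv_spec (Quotient.exact hx)
    have h1' : (FQAux.rr φ x.out.1).1 = t := h1
    have hk2 : ((1 : FreeGroup S))
        = FQAux.psi φ x.out.2 * (FQAux.rr φ x.out.1).2
          * FreeGroup.of ((FQAux.rr φ x.out.1).1) ^ k := hk
    refine ⟨x.out.1, x.out.2, k, h1', ?_⟩
    rw [← h1']
    exact hk2
  have csurj : Function.Surjective (fun s => (FQAux.rr φ s).1) := by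
    intro t; obtain ⟨b, _, _, h1, _⟩ := hdata t; exact ⟨b, h1⟩
  have cinj : Function.Injective (fun s => (FQAux.rr φ s).1) :=
    Finite.injective_iff_surjective.mpr csurj
  have hgen : ∀ t : S, FreeGroup.of t ∈ (FQAux.psi φ).range := by
    intro t
    obtain ⟨b, u, k, h1, hk⟩ := hdata t
    refine ⟨u * FreeGroup.of b * u⁻¹, ?_⟩
    have hvb : (FQAux.rr φ b).2 = (FQAux.psi φ u)⁻¹ * (FreeGroup.of t) ^ (-k) := by
      calc (FQAux.rr φ b).2
          = (FQAux.psi φ u)⁻¹ * (FQAux.psi φ u * (FQAux.rr φ b).2 * (FreeGroup.of t) ^ k)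
            * (FreeGroup.of t) ^ (-k) := by group
        _ = (FQAux.psi φ u)⁻¹ * 1 * (FreeGroup.of t) ^ (-k) := by rw [← hk]
        _ = (FQAux.psi φ u)⁻¹ * (FreeGroup.of t) ^ (-k) := by group
    have hm : FQAux.psi φ (u * FreeGroup.of b * u⁻¹)
        = FQAux.psi φ u * FreeRack.toGroup (FQAux.rr φ b) * (FQAux.psi φ u)⁻¹ := by
      rw [map_mul, map_mul, map_inv, FQAux.psi_of]
    have htg : FreeRack.toGroup (FQAux.rr φ b)
        = (FQAux.rr φ b).2 * FreeGroup.of ((FQAux.rr φ b).1) * ((FQAux.rr φ b).2)⁻¹ := rfl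
    rw [hm, htg, h1, hvb]
    group
  have hψsurj : Function.Surjective (FQAux.psi φ) := by
    rw [← MonoidHom.range_eq_top, ← top_le_iff, ← FreeGroup.closure_range_of S,
      Subgroup.closure_le]
    rintro _ ⟨t, rfl⟩
    exact hgen t
  have hψinj : Function.Injective (FQAux.psi φ) := FQAux.freeGroup_hopfian _ hψsurj
  intro x y hxy
  have hxx : FQAux.fqmk ((x.out.1, x.out.2) : FreeRack S) = x := by
    exact Quotient.out_eq x
  have hyy : FQAux.fqmk ((y.out.1, y.out.2) : FreeRack S) = y := by
    exact Quotient.out_eq y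
  rw [← hxx, ← hyy] at hxy ⊢
  rw [FQAux.phi_formula, FQAux.phi_formula] at hxy
  obtain ⟨h1, k, hk⟩ := FQAux.eqv_spec (Quotient.exact hxy)
  have hab : x.out.1 = y.out.1 := cinj h1
  have hvv : (FQAux.rr φ x.out.1).2 = (FQAux.rr φ y.out.1).2 := by rw [hab]
  rw [← hvv] at hk
  have hk' : FQAux.psi φ y.out.2
      = FQAux.psi φ x.out.2 * (FQAux.rr φ x.out.1).2
        * FreeGroup.of ((FQAux.rr φ x.out.1).1) ^ k * ((FQAux.rr φ x.out.1).2)⁻¹ := by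
    refine mul_right_cancel (b := (FQAux.rr φ x.out.1).2) ?_
    have hk0 : FQAux.psi φ y.out.2 * (FQAux.rr φ x.out.1).2
        = FQAux.psi φ x.out.2 * (FQAux.rr φ x.out.1).2
          * FreeGroup.of ((FQAux.rr φ x.out.1).1) ^ k := hk
    rw [hk0]
    group
  have hψeq : FQAux.psi φ y.out.2
      = FQAux.psi φ (x.out.2 * FreeGroup.of x.out.1 ^ k) := by
    have expand : FQAux.psi φ (x.out.2 * FreeGroup.of x.out.1 ^ k)
        = FQAux.psi φ x.out.2 * (FreeRack.toGroup (FQAux.rr φ x.out.1)) ^ k := by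
      rw [map_mul, map_zpow, FQAux.psi_of]
    have htg : FreeRack.toGroup (FQAux.rr φ x.out.1)
        = (FQAux.rr φ x.out.1).2 * FreeGroup.of ((FQAux.rr φ x.out.1).1)
          * ((FQAux.rr φ x.out.1).2)⁻¹ := rfl
    rw [expand, htg, hk', conj_zpow]
    group
  have heq2 : y.out.2 = x.out.2 * FreeGroup.of x.out.1 ^ k := hψinj hψeq
  rw [heq2, ← hab]
  exact FQAux.eqv_pow _ _ k
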